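/- In the free associative algebra A_2 = K⟨x_1, x_2⟩ over a field K of characteristic 0, the element 2 x_2 x_1 [x_3, x_4] − x_1 x_2 [x_3, x_4] ∈ K⟨x_1, x_2, x_3, x_4⟩ is not balanced, i.e., it does not lie in the span of all elements x_{i_1} x_{i_2} ⋯ x_{i_m} − x_{i_2} ⋯ x_{i_m} x_{i_1} of degree m = 4. -/
import Mathlib

noncomputable def fmat (K : Type*) [Field K] : Fin 4 → Matrix (Fin 4) (Fin 4) K
  | 0 => Matrix.single 1 2 1
  | 1 => Matrix.single 0 1 1
  | 2 => Matrix.single 2 3 1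
  | 3 => Matrix.single 3 0 1

noncomputable def phi (K : Type*) [Field K] : FreeAlgebra K (Fin 4) →ₗ[K] K :=
  (Matrix.traceLinearMap (Fin 4) K K).comp (FreeAlgebra.lift K (fmat K)).toLinearMap

theorem stmt13 (K : Type*) [Field K] [CharZero K] :
    2 * FreeAlgebra.ι K (1 : Fin 4) * FreeAlgebra.ι K (0 : Fin 4) *
        ⁅FreeAlgebra.ι K (2 : Fin 4), FreeAlgebra.ι K (3 : Fin 4)⁆ -
      FreeAlgebra.ι K (0 : Fin 4) * FreeAlgebra.ι K (1 : Fin 4) *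
        ⁅FreeAlgebra.ι K (2 : Fin 4), FreeAlgebra.ι K (3 : Fin 4)⁆ ∉
    Submodule.span K {w : FreeAlgebra K (Fin 4) |
      ∃ (i₀ : Fin 4) (l : List (Fin 4)), l.length = 3 ∧
        w = FreeAlgebra.ι K i₀ * (l.map (FreeAlgebra.ι K)).prod -
            (l.map (FreeAlgebra.ι K)).prod * FreeAlgebra.ι K i₀} := by
  intro h
  have hker : Submodule.span K {w : FreeAlgebra K (Fin 4) |
      ∃ (i₀ : Fin 4) (l : List (Fin 4)), l.length = 3 ∧
        w = FreeAlgebra.ι K i₀ * (l.map (FreeAlgebra.ι K)).prod -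
            (l.map (FreeAlgebra.ι K)).prod * FreeAlgebra.ι K i₀} ≤ LinearMap.ker (phi K) := by
    rw [Submodule.span_le]
    rintro w ⟨i₀, l, -, rfl⟩
    simp only [SetLike.mem_coe, LinearMap.mem_ker, phi, LinearMap.comp_apply,
      AlgHom.toLinearMap_apply, map_sub, map_mul, Matrix.traceLinearMap_apply]
    rw [Matrix.trace_mul_comm]
    ring
  have h0 := hker h
  rw [LinearMap.mem_ker] at h0
  have : phi K (2 * FreeAlgebra.ι K (1 : Fin 4) * FreeAlgebra.ι K (0 : Fin 4) *
        ⁅FreeAlgebra.ι K (2 : Fin 4), FreeAlgebra.ι K (3 : Fin 4)⁆ -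
      FreeAlgebra.ι K (0 : Fin 4) * FreeAlgebra.ι K (1 : Fin 4) *
        ⁅FreeAlgebra.ι K (2 : Fin 4), FreeAlgebra.ι K (3 : Fin 4)⁆) = 2 := by
    rw [two_mul]
    simp only [phi, LinearMap.comp_apply, AlgHom.toLinearMap_apply, Ring.lie_def,
      map_sub, map_mul, map_add, FreeAlgebra.lift_ι_apply, fmat,
      Matrix.traceLinearMap_apply]
    simp [Matrix.trace, Matrix.diag, Matrix.mul_apply, Fin.sum_univ_four,
      Matrix.single]
    norm_num
  rw [h0] at this
  exact two_ne_zero this.symm
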